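/- arXiv:math/0703840 — 3 statements merged into one kernel-verified Lean document; each statement's English description precedes it below -/
import Mathlib

section
/- The (ℤ₂×ℤ₂)-grading (gr5) of the Jordan algebra H₃(F), given by H_{(0,0)} = span{E₁,E₂,E₃}, H_{(0,1)} = span{S₂₃}, H_{(1,0)} = span{S₁₃}, H_{(1,1)} = span{S₁₂}, is indeed a (ℤ₂×ℤ₂)-grading (H_g∘H_h ⊆ H_{g+h} and H₃(F) = ⊕_{g} H_g), and it is fine: every abelian group grading of H₃(F) refining it has exactly the same set of nonzero homogeneous components. -/
noncomputable section

open Matrix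

variable (F : Type*) [Field F] [IsAlgClosed F] [CharZero F]

set_option linter.unusedSectionVars false

/-- The space of symmetric 3×3 matrices over `F`, as a submodule of all 3×3 matrices. -/
def symSub : Submodule F (Matrix (Fin 3) (Fin 3) F) where
  carrier := {x | x.IsSymm}
  add_mem' := by
    intro a b ha hb
    simp only [Set.mem_setOf_eq, Matrix.IsSymm, Matrix.transpose_add] at *
    rw [ha, hb]
  zero_mem' := by simp [Matrix.IsSymm]
  smul_mem' := by
    intro c a ha
    simp only [Set.mem_setOf_eq, Matrix.IsSymm, Matrix.transpose_smul] at *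
    rw [ha]

lemma mem_symSub {x : Matrix (Fin 3) (Fin 3) F} : x ∈ symSub F ↔ x.IsSymm := Iff.rfl

/-- The Jordan algebra `H₃(F)` of symmetric 3×3 matrices. -/
abbrev H3 := ↥(symSub F)

lemma jmul_mem (x y : Matrix (Fin 3) (Fin 3) F) (hx : x.IsSymm) (hy : y.IsSymm) :
    ((1/2 : F) • (x * y + y * x)).IsSymm := by
  simp only [Matrix.IsSymm] at *
  rw [Matrix.transpose_smul, Matrix.transpose_add, Matrix.transpose_mul, Matrix.transpose_mul,
    hx, hy, add_comm]

/-- The Jordan product on `H₃(F)`: `x ∘ y = (xy + yx)/2`. -/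
def jmulS (x y : H3 F) : H3 F :=
  ⟨(1/2 : F) • ((x : Matrix (Fin 3) (Fin 3) F) * y + (y : Matrix (Fin 3) (Fin 3) F) * x),
    (mem_symSub F).mpr (jmul_mem F x y ((mem_symSub F).mp x.2) ((mem_symSub F).mp y.2))⟩

/-- The diagonal matrix unit `E_j`, as an element of `H₃(F)`. -/
def EJ (j : Fin 3) : H3 F :=
  ⟨Matrix.single j j 1, (mem_symSub F).mpr <| Matrix.IsSymm.ext fun a b => by
    simp [Matrix.single, and_comm]⟩

/-- The symmetrized off-diagonal matrix unit `S_{jk} = e_{jk} + e_{kj}`. -/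
def SJ (j k : Fin 3) : H3 F :=
  ⟨Matrix.single j k 1 + Matrix.single k j 1, (mem_symSub F).mpr <|
    Matrix.IsSymm.ext fun a b => by
      simp [Matrix.single, and_comm, add_comm]⟩

/-- A `G`-grading of the Jordan algebra `H₃(F)`. -/
def IsGrading {G : Type*} [AddCommGroup G] [DecidableEq G]
    (H : G → Submodule F (H3 F)) : Prop :=
  DirectSum.IsInternal H ∧ ∀ g h : G, ∀ x ∈ H g, ∀ y ∈ H h, jmulS F x y ∈ H (g + h)

/-- Equivalence of gradings. -/
def GradEquiv {G G' : Type*} (H : G → Submodule F (H3 F)) (H' : G' → Submodule F (H3 F)) :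
    Prop :=
  ∃ (f : H3 F ≃ₗ[F] H3 F) (α : G → G'),
    (∀ x y : H3 F, f (jmulS F x y) = jmulS F (f x) (f y)) ∧
    Set.BijOn α {g | H g ≠ ⊥} {g' | H' g' ≠ ⊥} ∧
    ∀ g, H g ≠ ⊥ → Submodule.map (f : H3 F →ₗ[F] H3 F) (H g) = H' (α g)


/-- The ℤ-grading (gr1) of `H₃(F)`. -/
def gr1 (I : F) : ℤ → Submodule F (H3 F) := fun n =>
  if n = 0 then Submodule.span F {EJ F 0, EJ F 1 + EJ F 2}
  else if n = 1 then Submodule.span F {(-I) • SJ F 0 1 + SJ F 0 2}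
  else if n = -1 then Submodule.span F {I • SJ F 0 1 + SJ F 0 2}
  else if n = 2 then Submodule.span F {(-I) • EJ F 1 + I • EJ F 2 + SJ F 1 2}
  else if n = -2 then Submodule.span F {I • EJ F 1 + (-I) • EJ F 2 + SJ F 1 2}
  else ⊥

/-- The ℤ₂-grading (gr2) of `H₃(F)`. -/
def gr2 : ZMod 2 → Submodule F (H3 F) := fun g =>
  if g = 0 then Submodule.span F {EJ F 0, EJ F 1, EJ F 2, SJ F 1 2}
  else Submodule.span F {SJ F 0 1, SJ F 0 2}

/-- The ℤ₃-grading (gr3) of `H₃(F)`. -/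
def gr3 (I : F) : ZMod 3 → Submodule F (H3 F) := fun g =>
  if g = 0 then Submodule.span F {EJ F 0, EJ F 1 + EJ F 2}
  else if g = 1 then
    Submodule.span F {SJ F 0 2 + (-I) • SJ F 0 1, I • EJ F 1 + (-I) • EJ F 2 + SJ F 1 2}
  else Submodule.span F {SJ F 0 2 + I • SJ F 0 1, (-I) • EJ F 1 + I • EJ F 2 + SJ F 1 2}

/-- The ℤ₄-grading (gr4) of `H₃(F)`. -/
def gr4 (I : F) : ZMod 4 → Submodule F (H3 F) := fun g =>
  if g = 0 then Submodule.span F {EJ F 0, EJ F 1 + EJ F 2}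
  else if g = 1 then Submodule.span F {(-I) • SJ F 0 1 + SJ F 0 2}
  else if g = 2 then Submodule.span F {EJ F 1 - EJ F 2, SJ F 1 2}
  else Submodule.span F {I • SJ F 0 1 + SJ F 0 2}

/-- The (ℤ₂×ℤ₂)-grading (gr5) of `H₃(F)`. -/
def gr5 : ZMod 2 × ZMod 2 → Submodule F (H3 F) := fun g =>
  if g = (0, 0) then Submodule.span F {EJ F 0, EJ F 1, EJ F 2}
  else if g = (0, 1) then Submodule.span F {SJ F 1 2}
  else if g = (1, 0) then Submodule.span F {SJ F 0 2}
  else Submodule.span F {SJ F 0 1}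

/-- `H'` refines `H` if every nonzero homogeneous component of `H` is a (direct) sum of
homogeneous components of `H'`. -/
def Refines {G' G : Type*} (H' : G' → Submodule F (H3 F)) (H : G → Submodule F (H3 F)) :
    Prop :=
  ∀ g, H g ≠ ⊥ → ∃ S : Set G', H g = ⨆ g' ∈ S, H' g'

/-- A grading is fine if every abelian group grading refining it has the same set of
nonzero homogeneous components. -/
def IsFine {G : Type*} [AddCommGroup G] [DecidableEq G]
    (H : G → Submodule F (H3 F)) : Prop :=
  ∀ (G' : Type) [AddCommGroup G'] [DecidableEq G'] (H' : G' → Submodule F (H3 F)),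
    IsGrading F H' → Refines F H' H →
    {N : Submodule F (H3 F) | N ≠ ⊥ ∧ ∃ g', H' g' = N} =
      {N : Submodule F (H3 F) | N ≠ ⊥ ∧ ∃ g, H g = N}



lemma symm_entry (x : H3 F) (i j : Fin 3) :
    (x : Matrix (Fin 3) (Fin 3) F) j i = (x : Matrix (Fin 3) (Fin 3) F) i j := by
  have h : (x : Matrix (Fin 3) (Fin 3) F)ᵀ = (x : Matrix (Fin 3) (Fin 3) F) := x.2
  have := congrFun (congrFun h i) j
  simpa using this

lemma H3_repr (x : H3 F) :
    x = (x : Matrix (Fin 3) (Fin 3) F) 0 0 • EJ F 0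
      + (x : Matrix (Fin 3) (Fin 3) F) 1 1 • EJ F 1
      + (x : Matrix (Fin 3) (Fin 3) F) 2 2 • EJ F 2
      + (x : Matrix (Fin 3) (Fin 3) F) 0 1 • SJ F 0 1
      + (x : Matrix (Fin 3) (Fin 3) F) 0 2 • SJ F 0 2
      + (x : Matrix (Fin 3) (Fin 3) F) 1 2 • SJ F 1 2 := by
  apply Subtype.ext
  ext i j
  fin_cases i <;> fin_cases j <;>
    simp [EJ, SJ, Matrix.single] <;> exact symm_entry F x _ _

lemma jmulS_comm (x y : H3 F) : jmulS F x y = jmulS F y x := by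
  apply Subtype.ext; show (1/2:F) • _ = (1/2:F) • _; rw [add_comm]

lemma jmulS_add_left (x x' y : H3 F) :
    jmulS F (x + x') y = jmulS F x y + jmulS F x' y := by
  apply Subtype.ext
  simp only [jmulS, Submodule.coe_add]
  simp only [add_mul, mul_add, smul_add]
  abel

lemma jmulS_smul_left (c : F) (x y : H3 F) :
    jmulS F (c • x) y = c • jmulS F x y := by
  apply Subtype.ext
  simp only [jmulS, SetLike.val_smul]
  rw [smul_mul_assoc, mul_smul_comm, ← smul_add, smul_comm]

lemma jmulS_zero_left (y : H3 F) : jmulS F 0 y = 0 := by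
  apply Subtype.ext
  simp [jmulS]

lemma jmul_span_span {s t : Set (H3 F)} {U : Submodule F (H3 F)}
    (h : ∀ a ∈ s, ∀ b ∈ t, jmulS F a b ∈ U) :
    ∀ x ∈ Submodule.span F s, ∀ y ∈ Submodule.span F t, jmulS F x y ∈ U := by
  have right : ∀ a ∈ s, ∀ y ∈ Submodule.span F t, jmulS F a y ∈ U := by
    intro a ha y hy
    induction hy using Submodule.span_induction with
    | mem b hb => exact h a ha b hb
    | zero => rw [jmulS_comm, jmulS_zero_left]; exact U.zero_mem
    | add u v hu hv hu' hv' =>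
        rw [jmulS_comm, jmulS_add_left, jmulS_comm F u, jmulS_comm F v]
        exact U.add_mem hu' hv'
    | smul c u hu hu' =>
        rw [jmulS_comm, jmulS_smul_left, jmulS_comm F u]
        exact U.smul_mem c hu'
  intro x hx
  induction hx using Submodule.span_induction with
  | mem a ha => exact right a ha
  | zero => intro y hy; rw [jmulS_zero_left]; exact U.zero_mem
  | add u v hu hv hu' hv' =>
      intro y hy; rw [jmulS_add_left]; exact U.add_mem (hu' y hy) (hv' y hy)
  | smul c u hu hu' =>
      intro y hy; rw [jmulS_smul_left]; exact U.smul_mem c (hu' y hy)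

lemma SJ_comm (j k : Fin 3) : SJ F j k = SJ F k j := by
  apply Subtype.ext; show _ + _ = _ + _; rw [add_comm]

lemma jmul_EE_same (j : Fin 3) : jmulS F (EJ F j) (EJ F j) = EJ F j := by
  apply Subtype.ext
  show (1/2:F) • (single j j 1 * single j j 1
      + single j j 1 * single j j 1) = single j j 1
  simp only [Matrix.single_mul_single_same, one_mul]
  module

lemma jmul_EE_ne {j k : Fin 3} (h : j ≠ k) : jmulS F (EJ F j) (EJ F k) = 0 := by
  apply Subtype.ext
  show (1/2:F) • (single j j 1 * single k k 1
      + single k k 1 * single j j 1) = 0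
  simp [Matrix.single_mul_single_of_ne, h, h.symm]

lemma jmul_ES_left {j k : Fin 3} (h : j ≠ k) :
    jmulS F (EJ F j) (SJ F j k) = (1/2:F) • SJ F j k := by
  apply Subtype.ext
  show (1/2:F) • (single j j 1 * (single j k 1 + single k j 1)
      + (single j k 1 + single k j 1) * single j j 1)
      = (1/2:F) • (single j k 1 + single k j 1)
  simp [mul_add, add_mul, Matrix.single_mul_single_same,
    Matrix.single_mul_single_of_ne, h, h.symm]

lemma jmul_ES_right {j k : Fin 3} (h : j ≠ k) :
    jmulS F (EJ F k) (SJ F j k) = (1/2:F) • SJ F j k := by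
  rw [SJ_comm, jmul_ES_left F h.symm, SJ_comm]

lemma jmul_ES_none {i j k : Fin 3} (hij : i ≠ j) (hik : i ≠ k) :
    jmulS F (EJ F i) (SJ F j k) = 0 := by
  apply Subtype.ext
  show (1/2:F) • (single i i 1 * (single j k 1 + single k j 1)
      + (single j k 1 + single k j 1) * single i i 1) = 0
  simp [mul_add, add_mul, Matrix.single_mul_single_of_ne, hij, hik, hij.symm, hik.symm]

lemma jmul_SS_same {j k : Fin 3} (h : j ≠ k) :
    jmulS F (SJ F j k) (SJ F j k) = EJ F j + EJ F k := by
  apply Subtype.ext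
  show (1/2:F) • ((single j k 1 + single k j 1) * (single j k 1 + single k j 1)
      + (single j k 1 + single k j 1) * (single j k 1 + single k j 1))
      = single j j 1 + single k k 1
  simp [mul_add, add_mul, Matrix.single_mul_single_same,
    Matrix.single_mul_single_of_ne, h, h.symm, -Matrix.smul_single]
  module

lemma jmul_SS_link {i j k : Fin 3} (hij : i ≠ j) (hjk : j ≠ k) (hik : i ≠ k) :
    jmulS F (SJ F i j) (SJ F j k) = (1/2:F) • SJ F i k := by
  apply Subtype.ext
  show (1/2:F) • ((single i j 1 + single j i 1) * (single j k 1 + single k j 1)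
      + (single j k 1 + single k j 1) * (single i j 1 + single j i 1))
      = (1/2:F) • (single i k 1 + single k i 1)
  simp [mul_add, add_mul, Matrix.single_mul_single_same,
    Matrix.single_mul_single_of_ne, hij, hik, hjk, hij.symm, hik.symm, hjk.symm]

def dg : Fin 3 → ZMod 2 × ZMod 2 := ![(0,0), (1,1), (1,0)]

def vmod (P : Fin 3 → Fin 3 → Prop) : Submodule F (H3 F) where
  carrier := {x | ∀ i j, P i j → (x : Matrix (Fin 3) (Fin 3) F) i j = 0}
  add_mem' := by
    intro a b ha hb i j hij
    simp only [Submodule.coe_add, Matrix.add_apply, ha i j hij, hb i j hij, add_zero]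
  zero_mem' := by intro i j _; simp
  smul_mem' := by
    intro c a ha i j hij
    simp only [SetLike.val_smul, Matrix.smul_apply, ha i j hij, smul_zero]

def Wm (g : ZMod 2 × ZMod 2) : Submodule F (H3 F) := vmod F (fun i j => dg i + dg j ≠ g)

def Vm (g : ZMod 2 × ZMod 2) : Submodule F (H3 F) := vmod F (fun i j => dg i + dg j = g)

lemma mem_Wm {g : ZMod 2 × ZMod 2} {x : H3 F} :
    x ∈ Wm F g ↔ ∀ i j, dg i + dg j ≠ g → (x : Matrix (Fin 3) (Fin 3) F) i j = 0 := Iff.rfl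

lemma mem_Vm {g : ZMod 2 × ZMod 2} {x : H3 F} :
    x ∈ Vm F g ↔ ∀ i j, dg i + dg j = g → (x : Matrix (Fin 3) (Fin 3) F) i j = 0 := Iff.rfl

lemma dg_self (r : Fin 3) : dg r + dg r = 0 := by fin_cases r <;> decide

lemma Wm_mul_entry (a b : ZMod 2 × ZMod 2) (u v : H3 F) (hu : u ∈ Wm F a) (hv : v ∈ Wm F b)
    (i j : Fin 3) (hne : dg i + dg j ≠ a + b) :
    ((u : Matrix (Fin 3) (Fin 3) F) * v) i j = 0 := by
  rw [Matrix.mul_apply]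
  apply Finset.sum_eq_zero
  intro r _
  by_cases hur : (u : Matrix (Fin 3) (Fin 3) F) i r = 0
  · rw [hur, zero_mul]
  by_cases hvr : (v : Matrix (Fin 3) (Fin 3) F) r j = 0
  · rw [hvr, mul_zero]
  exfalso
  have e1 : dg i + dg r = a := by by_contra hc; exact hur ((mem_Wm F).mp hu i r hc)
  have e2 : dg r + dg j = b := by by_contra hc; exact hvr ((mem_Wm F).mp hv r j hc)
  apply hne
  rw [← e1, ← e2,
    show (dg i + dg r) + (dg r + dg j) = (dg i + dg j) + (dg r + dg r) from by abel,
    dg_self, add_zero]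

lemma Wm_mul (g h : ZMod 2 × ZMod 2) (x y : H3 F) (hx : x ∈ Wm F g) (hy : y ∈ Wm F h) :
    jmulS F x y ∈ Wm F (g + h) := by
  rw [mem_Wm]
  intro i j hij
  show ((1/2:F) • ((x : Matrix (Fin 3) (Fin 3) F) * y + (y : Matrix (Fin 3) (Fin 3) F) * x)) i j = 0
  rw [Matrix.smul_apply, Matrix.add_apply, Wm_mul_entry F g h x y hx hy i j hij,
    Wm_mul_entry F h g y x hy hx i j (by rwa [add_comm h g]), add_zero, smul_zero]

lemma four_cases (g : ZMod 2 × ZMod 2) :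
    g = (0,0) ∨ g = (0,1) ∨ g = (1,0) ∨ g = (1,1) := by
  revert g; decide

lemma gr5_eq_Wm (g : ZMod 2 × ZMod 2) : gr5 F g = Wm F g := by
  have memE : ∀ i : Fin 3, EJ F i ∈ Wm F (dg i + dg i) := by
    intro i
    rw [mem_Wm]
    intro p q hpq
    by_cases hp : i = p ∧ i = q
    · exact absurd (show dg p + dg q = dg i + dg i by rw [← hp.1, ← hp.2]) hpq
    · show Matrix.single i i (1:F) p q = 0
      exact Matrix.single_apply_of_ne _ _ _ _ _ hp
  have memS : ∀ j k : Fin 3, j ≠ k → SJ F j k ∈ Wm F (dg j + dg k) := by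
    intro j k hjk
    rw [mem_Wm]
    intro p q hpq
    show Matrix.single j k (1:F) p q + Matrix.single k j (1:F) p q = 0
    have h1 : Matrix.single j k (1:F) p q = 0 := by
      apply Matrix.single_apply_of_ne
      rintro ⟨rfl, rfl⟩; exact hpq rfl
    have h2 : Matrix.single k j (1:F) p q = 0 := by
      apply Matrix.single_apply_of_ne
      rintro ⟨rfl, rfl⟩; exact hpq (by rw [add_comm])
    rw [h1, h2, add_zero]
  rcases four_cases g with rfl | rfl | rfl | rfl
  · rw [show gr5 F (0,0) = Submodule.span F {EJ F 0, EJ F 1, EJ F 2} from if_pos rfl]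
    apply le_antisymm
    · rw [Submodule.span_le]
      rintro x (rfl | rfl | rfl)
      exacts [memE 0, memE 1, memE 2]
    · intro x hx
      rw [mem_Wm] at hx
      have h01 : (x : Matrix (Fin 3) (Fin 3) F) 0 1 = 0 := hx 0 1 (by decide)
      have h02 : (x : Matrix (Fin 3) (Fin 3) F) 0 2 = 0 := hx 0 2 (by decide)
      have h12 : (x : Matrix (Fin 3) (Fin 3) F) 1 2 = 0 := hx 1 2 (by decide)
      rw [H3_repr F x, h01, h02, h12, zero_smul, zero_smul, zero_smul, add_zero, add_zero,
        add_zero]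
      refine add_mem (add_mem ?_ ?_) ?_ <;>
        exact Submodule.smul_mem _ _ (Submodule.subset_span (by simp))
  · rw [show gr5 F (0,1) = Submodule.span F {SJ F 1 2} from by
      rw [gr5, if_neg (by decide), if_pos rfl]]
    apply le_antisymm
    · rw [Submodule.span_le]
      rintro x rfl
      exact memS 1 2 (by decide)
    · intro x hx
      rw [mem_Wm] at hx
      have h00 : (x : Matrix (Fin 3) (Fin 3) F) 0 0 = 0 := hx 0 0 (by decide)
      have h11 : (x : Matrix (Fin 3) (Fin 3) F) 1 1 = 0 := hx 1 1 (by decide)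
      have h22 : (x : Matrix (Fin 3) (Fin 3) F) 2 2 = 0 := hx 2 2 (by decide)
      have h01 : (x : Matrix (Fin 3) (Fin 3) F) 0 1 = 0 := hx 0 1 (by decide)
      have h02 : (x : Matrix (Fin 3) (Fin 3) F) 0 2 = 0 := hx 0 2 (by decide)
      rw [H3_repr F x, h00, h11, h22, h01, h02]
      simp only [zero_smul, add_zero, zero_add]
      exact Submodule.smul_mem _ _ (Submodule.mem_span_singleton_self _)
  · rw [show gr5 F (1,0) = Submodule.span F {SJ F 0 2} from by
      rw [gr5, if_neg (by decide), if_neg (by decide), if_pos rfl]]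
    apply le_antisymm
    · rw [Submodule.span_le]
      rintro x rfl
      exact memS 0 2 (by decide)
    · intro x hx
      rw [mem_Wm] at hx
      have h00 : (x : Matrix (Fin 3) (Fin 3) F) 0 0 = 0 := hx 0 0 (by decide)
      have h11 : (x : Matrix (Fin 3) (Fin 3) F) 1 1 = 0 := hx 1 1 (by decide)
      have h22 : (x : Matrix (Fin 3) (Fin 3) F) 2 2 = 0 := hx 2 2 (by decide)
      have h01 : (x : Matrix (Fin 3) (Fin 3) F) 0 1 = 0 := hx 0 1 (by decide)
      have h12 : (x : Matrix (Fin 3) (Fin 3) F) 1 2 = 0 := hx 1 2 (by decide)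
      rw [H3_repr F x, h00, h11, h22, h01, h12]
      simp only [zero_smul, add_zero, zero_add]
      exact Submodule.smul_mem _ _ (Submodule.mem_span_singleton_self _)
  · rw [show gr5 F (1,1) = Submodule.span F {SJ F 0 1} from by
      rw [gr5, if_neg (by decide), if_neg (by decide), if_neg (by decide)]]
    apply le_antisymm
    · rw [Submodule.span_le]
      rintro x rfl
      exact memS 0 1 (by decide)
    · intro x hx
      rw [mem_Wm] at hx
      have h00 : (x : Matrix (Fin 3) (Fin 3) F) 0 0 = 0 := hx 0 0 (by decide)
      have h11 : (x : Matrix (Fin 3) (Fin 3) F) 1 1 = 0 := hx 1 1 (by decide)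
      have h22 : (x : Matrix (Fin 3) (Fin 3) F) 2 2 = 0 := hx 2 2 (by decide)
      have h02 : (x : Matrix (Fin 3) (Fin 3) F) 0 2 = 0 := hx 0 2 (by decide)
      have h12 : (x : Matrix (Fin 3) (Fin 3) F) 1 2 = 0 := hx 1 2 (by decide)
      rw [H3_repr F x, h00, h11, h22, h02, h12]
      simp only [zero_smul, add_zero, zero_add]
      exact Submodule.smul_mem _ _ (Submodule.mem_span_singleton_self _)

lemma gr5_00 : gr5 F (0,0) = Submodule.span F {EJ F 0, EJ F 1, EJ F 2} := by
  rw [gr5]; exact if_pos rfl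

lemma gr5_01 : gr5 F (0,1) = Submodule.span F {SJ F 1 2} := by
  rw [gr5, if_neg (by decide), if_pos rfl]

lemma gr5_10 : gr5 F (1,0) = Submodule.span F {SJ F 0 2} := by
  rw [gr5, if_neg (by decide), if_neg (by decide), if_pos rfl]

lemma gr5_11 : gr5 F (1,1) = Submodule.span F {SJ F 0 1} := by
  rw [gr5, if_neg (by decide), if_neg (by decide), if_neg (by decide)]

lemma EJ_ne_zero (i : Fin 3) : EJ F i ≠ 0 := by
  intro h
  have := congrFun (congrFun (congrArg Subtype.val h) i) i
  simp [EJ] at this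

lemma SJ_ne_zero {j k : Fin 3} (h : j ≠ k) : SJ F j k ≠ 0 := by
  intro h0
  have he := congrFun (congrFun (congrArg Subtype.val h0) j) k
  have h2 : Matrix.single k j (1:F) j k = 0 :=
    Matrix.single_apply_of_ne _ _ _ _ _ (by rintro ⟨rfl, -⟩; exact h rfl)
  simp only [SJ, Matrix.add_apply, Matrix.single_apply_same, h2, add_zero] at he
  exact one_ne_zero he

lemma EJ_not_mem_span_SJ (i j k : Fin 3) (hjk : j ≠ k) :
    EJ F i ∉ Submodule.span F {SJ F j k} := by
  rw [Submodule.mem_span_singleton]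
  rintro ⟨cc, hcc⟩
  have he := congrFun (congrFun (congrArg Subtype.val hcc) i) i
  have h1 : Matrix.single j k (1:F) i i = 0 :=
    Matrix.single_apply_of_ne _ _ _ _ _ (by rintro ⟨rfl, rfl⟩; exact hjk rfl)
  have h2 : Matrix.single k j (1:F) i i = 0 :=
    Matrix.single_apply_of_ne _ _ _ _ _ (by rintro ⟨rfl, rfl⟩; exact hjk rfl)
  have hL : ((cc • SJ F j k : H3 F) : Matrix (Fin 3) (Fin 3) F) i i = 0 := by
    show cc • (Matrix.single j k (1:F) i i + Matrix.single k j (1:F) i i) = 0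
    rw [h1, h2, add_zero, smul_zero]
  rw [hL] at he
  have hR : ((EJ F i : H3 F) : Matrix (Fin 3) (Fin 3) F) i i = 1 := by
    show Matrix.single i i (1:F) i i = 1
    exact Matrix.single_apply_same ..
  rw [hR] at he
  exact one_ne_zero he.symm

lemma span_singleton_sub {v : H3 F} {N : Submodule F (H3 F)}
    (hle : N ≤ Submodule.span F {v}) (hN : N ≠ ⊥) : N = Submodule.span F {v} := by
  obtain ⟨x, hxN, hx0⟩ := (Submodule.ne_bot_iff N).mp hN
  obtain ⟨cc, hcc⟩ := Submodule.mem_span_singleton.mp (hle hxN)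
  have hc0 : cc ≠ 0 := by rintro rfl; rw [zero_smul] at hcc; exact hx0 hcc.symm
  apply le_antisymm hle
  rw [Submodule.span_le, Set.singleton_subset_iff]
  have hv : v = cc⁻¹ • x := by rw [← hcc, smul_smul, inv_mul_cancel₀ hc0, one_smul]
  rw [hv]
  exact Submodule.smul_mem _ _ hxN

lemma H3_split (x : H3 F) :
    x - ((x : Matrix (Fin 3) (Fin 3) F) 0 0 • EJ F 0
      + (x : Matrix (Fin 3) (Fin 3) F) 1 1 • EJ F 1
      + (x : Matrix (Fin 3) (Fin 3) F) 2 2 • EJ F 2)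
    = (x : Matrix (Fin 3) (Fin 3) F) 0 1 • SJ F 0 1
      + (x : Matrix (Fin 3) (Fin 3) F) 0 2 • SJ F 0 2
      + (x : Matrix (Fin 3) (Fin 3) F) 1 2 • SJ F 1 2 := by
  nth_rewrite 1 [H3_repr F x]
  module

lemma gr5_iSupIndep : iSupIndep (gr5 F) := by
  intro g
  have h2 : (⨆ h, ⨆ _ : h ≠ g, gr5 F h) ≤ Vm F g := by
    apply iSup_le; intro h; apply iSup_le; intro hne
    rw [gr5_eq_Wm]
    intro x hx
    rw [mem_Vm]
    intro i j hij
    exact (mem_Wm F).mp hx i j (by rw [hij]; exact Ne.symm hne)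
  refine Disjoint.mono (le_of_eq (gr5_eq_Wm F g)) h2 ?_
  rw [Submodule.disjoint_def]
  intro x hxW hxV
  apply Subtype.ext
  simp only [ZeroMemClass.coe_zero]
  ext i j
  rw [Matrix.zero_apply]
  by_cases hij : dg i + dg j = g
  · exact (mem_Vm F).mp hxV i j hij
  · exact (mem_Wm F).mp hxW i j hij

lemma gr5_iSup_top : (⨆ g, gr5 F g) = ⊤ := by
  rw [eq_top_iff]
  intro x _
  have hE : ∀ i : Fin 3, EJ F i ∈ gr5 F (0,0) := by
    intro i
    rw [gr5_00]
    exact Submodule.subset_span (by fin_cases i <;> simp)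
  rw [H3_repr F x]
  refine add_mem (add_mem (add_mem (add_mem (add_mem ?_ ?_) ?_) ?_) ?_) ?_
  · exact Submodule.mem_iSup_of_mem (0,0) (Submodule.smul_mem _ _ (hE 0))
  · exact Submodule.mem_iSup_of_mem (0,0) (Submodule.smul_mem _ _ (hE 1))
  · exact Submodule.mem_iSup_of_mem (0,0) (Submodule.smul_mem _ _ (hE 2))
  · exact Submodule.mem_iSup_of_mem (1,1) (Submodule.smul_mem _ _
      (by rw [gr5_11]; exact Submodule.mem_span_singleton_self _))
  · exact Submodule.mem_iSup_of_mem (1,0) (Submodule.smul_mem _ _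
      (by rw [gr5_10]; exact Submodule.mem_span_singleton_self _))
  · exact Submodule.mem_iSup_of_mem (0,1) (Submodule.smul_mem _ _
      (by rw [gr5_01]; exact Submodule.mem_span_singleton_self _))

/-- (gr5) is indeed a (ℤ₂×ℤ₂)-grading of `H₃(F)` and it is fine. -/
theorem H3_gr5_isGrading_and_fine :
    IsGrading F (gr5 F) ∧ IsFine F (gr5 F) := by
  constructor
  · constructor
    · exact DirectSum.isInternal_submodule_of_iSupIndep_of_iSup_eq_top (gr5_iSupIndep F)
        (gr5_iSup_top F)
    · intro g h x hx y hy
      rw [gr5_eq_Wm] at hx hy ⊢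
      exact Wm_mul F g h x y hx hy
  · intro G' _ _ H' hgr href
    obtain ⟨hint, hmulH⟩ := hgr
    have hindep : iSupIndep H' := hint.submodule_iSupIndep
    have hpair : Pairwise (Function.onFun Disjoint H') := hindep.pairwiseDisjoint
    have uniq : ∀ (g h : G') (x : H3 F), x ≠ 0 → x ∈ H' g → x ∈ H' h → g = h := by
      intro g h x hx hxg hxh
      by_contra hne
      exact hx (Submodule.disjoint_def.mp (hpair hne) x hxg hxh)
    have extract : ∀ (g : ZMod 2 × ZMod 2) (v : H3 F), v ≠ 0 →
        gr5 F g = Submodule.span F {v} → ∃ a : G', H' a = Submodule.span F {v} := by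
      intro g v hv hgv
      obtain ⟨S, hS⟩ := href g (by
        rw [hgv]
        exact fun hb => hv (Submodule.span_singleton_eq_bot.mp hb))
      have hnb : ∃ a ∈ S, H' a ≠ ⊥ := by
        by_contra hcon
        push_neg at hcon
        have hbot : (⨆ a ∈ S, H' a) = ⊥ := by
          apply le_bot_iff.mp
          apply iSup_le; intro a; apply iSup_le; intro haS
          rw [hcon a haS]
        have : Submodule.span F {v} = ⊥ := by rw [← hgv, hS, hbot]
        exact hv (Submodule.span_singleton_eq_bot.mp this)
      obtain ⟨a, haS, hanb⟩ := hnb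
      have hle : H' a ≤ Submodule.span F {v} := by
        rw [← hgv, hS]
        exact le_iSup₂ (f := fun a _ => H' a) a haS
      exact ⟨a, span_singleton_sub F hle hanb⟩
    obtain ⟨a, ha⟩ := extract (1,1) (SJ F 0 1) (SJ_ne_zero F (show (0:Fin 3) ≠ 1 by decide)) (gr5_11 F)
    obtain ⟨b, hb⟩ := extract (1,0) (SJ F 0 2) (SJ_ne_zero F (show (0:Fin 3) ≠ 2 by decide)) (gr5_10 F)
    obtain ⟨c, hc⟩ := extract (0,1) (SJ F 1 2) (SJ_ne_zero F (show (1:Fin 3) ≠ 2 by decide)) (gr5_01 F)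
    have memS01 : SJ F 0 1 ∈ H' a := by rw [ha]; exact Submodule.mem_span_singleton_self _
    have memS02 : SJ F 0 2 ∈ H' b := by rw [hb]; exact Submodule.mem_span_singleton_self _
    have memS12 : SJ F 1 2 ∈ H' c := by rw [hc]; exact Submodule.mem_span_singleton_self _
    have p_ab : jmulS F (SJ F 0 1) (SJ F 0 2) = (1/2:F) • SJ F 1 2 := by
      rw [SJ_comm F 0 1]
      exact jmul_SS_link F (by decide) (by decide) (by decide)
    have p_ac : jmulS F (SJ F 0 1) (SJ F 1 2) = (1/2:F) • SJ F 0 2 :=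
      jmul_SS_link F (by decide) (by decide) (by decide)
    have p_bc : jmulS F (SJ F 0 2) (SJ F 1 2) = (1/2:F) • SJ F 0 1 := by
      rw [SJ_comm F 1 2]
      exact jmul_SS_link F (by decide) (by decide) (by decide)
    have half_ne : ∀ {j k : Fin 3}, j ≠ k → (1/2:F) • SJ F j k ≠ 0 := fun h =>
      smul_ne_zero (by norm_num) (SJ_ne_zero F h)
    have hab : a + b = c := by
      apply uniq _ _ ((1/2:F) • SJ F 1 2) (half_ne (show (1:Fin 3) ≠ 2 by decide))
      · have t := hmulH a b _ memS01 _ memS02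
        rwa [p_ab] at t
      · rw [hc]; exact Submodule.smul_mem _ _ (Submodule.mem_span_singleton_self _)
    have hac : a + c = b := by
      apply uniq _ _ ((1/2:F) • SJ F 0 2) (half_ne (show (0:Fin 3) ≠ 2 by decide))
      · have t := hmulH a c _ memS01 _ memS12
        rwa [p_ac] at t
      · rw [hb]; exact Submodule.smul_mem _ _ (Submodule.mem_span_singleton_self _)
    have hbc : b + c = a := by
      apply uniq _ _ ((1/2:F) • SJ F 0 1) (half_ne (show (0:Fin 3) ≠ 1 by decide))
      · have t := hmulH b c _ memS02 _ memS12
        rwa [p_bc] at t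
      · rw [ha]; exact Submodule.smul_mem _ _ (Submodule.mem_span_singleton_self _)
    have h2a : a + a = 0 := by
      have h := hac
      rw [← hab, ← add_assoc] at h
      exact add_right_cancel (h.trans (zero_add b).symm)
    have h2b : b + b = 0 := by
      have h := hbc
      rw [← hab, show b + (a + b) = b + b + a from by abel] at h
      exact add_right_cancel (h.trans (zero_add a).symm)
    have h2c : c + c = 0 := by
      rw [← hab, show a + b + (a + b) = a + a + (b + b) from by abel, h2a, h2b, add_zero]
    have hsum01 : EJ F 0 + EJ F 1 ∈ H' 0 := by
      have t := hmulH a a _ memS01 _ memS01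
      rwa [jmul_SS_same F (by decide), h2a] at t
    have hsum02 : EJ F 0 + EJ F 2 ∈ H' 0 := by
      have t := hmulH b b _ memS02 _ memS02
      rwa [jmul_SS_same F (by decide), h2b] at t
    have hsum12 : EJ F 1 + EJ F 2 ∈ H' 0 := by
      have t := hmulH c c _ memS12 _ memS12
      rwa [jmul_SS_same F (by decide), h2c] at t
    have hE0 : EJ F 0 ∈ H' 0 := by
      have e : EJ F 0 = (1/2:F) • (EJ F 0 + EJ F 1) + (1/2:F) • (EJ F 0 + EJ F 2)
          - (1/2:F) • (EJ F 1 + EJ F 2) := by module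
      rw [e]
      exact sub_mem (add_mem (Submodule.smul_mem _ _ hsum01) (Submodule.smul_mem _ _ hsum02))
        (Submodule.smul_mem _ _ hsum12)
    have hE1 : EJ F 1 ∈ H' 0 := by
      have e : EJ F 1 = (1/2:F) • (EJ F 0 + EJ F 1) + (1/2:F) • (EJ F 1 + EJ F 2)
          - (1/2:F) • (EJ F 0 + EJ F 2) := by module
      rw [e]
      exact sub_mem (add_mem (Submodule.smul_mem _ _ hsum01) (Submodule.smul_mem _ _ hsum12))
        (Submodule.smul_mem _ _ hsum02)
    have hE2 : EJ F 2 ∈ H' 0 := by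
      have e : EJ F 2 = (1/2:F) • (EJ F 0 + EJ F 2) + (1/2:F) • (EJ F 1 + EJ F 2)
          - (1/2:F) • (EJ F 0 + EJ F 1) := by module
      rw [e]
      exact sub_mem (add_mem (Submodule.smul_mem _ _ hsum02) (Submodule.smul_mem _ _ hsum12))
        (Submodule.smul_mem _ _ hsum01)
    have hDle : Submodule.span F {EJ F 0, EJ F 1, EJ F 2} ≤ H' 0 := by
      rw [Submodule.span_le]
      rintro x (rfl | rfl | rfl) <;> assumption
    have ha0 : a ≠ 0 := by
      rintro rfl
      exact EJ_not_mem_span_SJ F 0 0 1 (by decide) (ha ▸ hE0)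
    have hb0 : b ≠ 0 := by
      rintro rfl
      exact EJ_not_mem_span_SJ F 0 0 2 (by decide) (hb ▸ hE0)
    have hc0 : c ≠ 0 := by
      rintro rfl
      exact EJ_not_mem_span_SJ F 0 1 2 (by decide) (hc ▸ hE0)
    have hab_ne : a ≠ b := fun h => hc0 (by rw [← hab, h]; exact h2b)
    have hac_ne : a ≠ c := fun h => hb0 (by rw [← hac, h]; exact h2c)
    have hbc_ne : b ≠ c := fun h => ha0 (by rw [← hbc, h]; exact h2c)
    have hH0le : H' 0 ≤ Submodule.span F {EJ F 0, EJ F 1, EJ F 2} := by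
      intro x hx
      have hd : (x : Matrix (Fin 3) (Fin 3) F) 0 0 • EJ F 0
          + (x : Matrix (Fin 3) (Fin 3) F) 1 1 • EJ F 1
          + (x : Matrix (Fin 3) (Fin 3) F) 2 2 • EJ F 2
          ∈ Submodule.span F {EJ F 0, EJ F 1, EJ F 2} := by
        refine add_mem (add_mem ?_ ?_) ?_ <;>
          exact Submodule.smul_mem _ _ (Submodule.subset_span (by simp))
      have hs : (x : Matrix (Fin 3) (Fin 3) F) 0 1 • SJ F 0 1
          + (x : Matrix (Fin 3) (Fin 3) F) 0 2 • SJ F 0 2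
          + (x : Matrix (Fin 3) (Fin 3) F) 1 2 • SJ F 1 2
          ∈ ⨆ h, ⨆ _ : h ≠ (0 : G'), H' h := by
        refine add_mem (add_mem ?_ ?_) ?_
        · exact (le_iSup₂ (f := fun h (_ : h ≠ (0:G')) => H' h) a ha0)
            (Submodule.smul_mem _ _ memS01)
        · exact (le_iSup₂ (f := fun h (_ : h ≠ (0:G')) => H' h) b hb0)
            (Submodule.smul_mem _ _ memS02)
        · exact (le_iSup₂ (f := fun h (_ : h ≠ (0:G')) => H' h) c hc0)
            (Submodule.smul_mem _ _ memS12)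
      have hmem : x - ((x : Matrix (Fin 3) (Fin 3) F) 0 0 • EJ F 0
          + (x : Matrix (Fin 3) (Fin 3) F) 1 1 • EJ F 1
          + (x : Matrix (Fin 3) (Fin 3) F) 2 2 • EJ F 2) ∈ H' 0 :=
        sub_mem hx (hDle hd)
      rw [H3_split F x] at hmem
      have hzero := Submodule.disjoint_def.mp (hindep 0) _ hmem hs
      have hxe : x = (x : Matrix (Fin 3) (Fin 3) F) 0 0 • EJ F 0
          + (x : Matrix (Fin 3) (Fin 3) F) 1 1 • EJ F 1
          + (x : Matrix (Fin 3) (Fin 3) F) 2 2 • EJ F 2 :=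
        sub_eq_zero.mp ((H3_split F x).trans hzero)
      rw [hxe]
      exact hd
    have hH0 : H' 0 = Submodule.span F {EJ F 0, EJ F 1, EJ F 2} := le_antisymm hH0le hDle
    have hbot : ∀ g' : G', g' ≠ 0 → g' ≠ a → g' ≠ b → g' ≠ c → H' g' = ⊥ := by
      intro g' h0 hA hB hC
      have htop : (⨆ h, ⨆ _ : h ≠ g', H' h) = ⊤ := by
        rw [eq_top_iff]
        intro x _
        rw [H3_repr F x]
        have m0 : ∀ y : H3 F, y ∈ H' 0 → y ∈ ⨆ h, ⨆ _ : h ≠ g', H' h := fun y hy =>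
          (le_iSup₂ (f := fun h (_ : h ≠ g') => H' h) 0 (Ne.symm h0)) hy
        have mA : ∀ y : H3 F, y ∈ H' a → y ∈ ⨆ h, ⨆ _ : h ≠ g', H' h := fun y hy =>
          (le_iSup₂ (f := fun h (_ : h ≠ g') => H' h) a (Ne.symm hA)) hy
        have mB : ∀ y : H3 F, y ∈ H' b → y ∈ ⨆ h, ⨆ _ : h ≠ g', H' h := fun y hy =>
          (le_iSup₂ (f := fun h (_ : h ≠ g') => H' h) b (Ne.symm hB)) hy
        have mC : ∀ y : H3 F, y ∈ H' c → y ∈ ⨆ h, ⨆ _ : h ≠ g', H' h := fun y hy =>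
          (le_iSup₂ (f := fun h (_ : h ≠ g') => H' h) c (Ne.symm hC)) hy
        refine add_mem (add_mem (add_mem (add_mem (add_mem ?_ ?_) ?_) ?_) ?_) ?_
        · exact m0 _ (Submodule.smul_mem _ _ hE0)
        · exact m0 _ (Submodule.smul_mem _ _ hE1)
        · exact m0 _ (Submodule.smul_mem _ _ hE2)
        · exact mA _ (Submodule.smul_mem _ _ memS01)
        · exact mB _ (Submodule.smul_mem _ _ memS02)
        · exact mC _ (Submodule.smul_mem _ _ memS12)
      have hd := hindep g'
      rw [htop] at hd
      exact disjoint_top.mp hd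
    ext N
    simp only [Set.mem_setOf_eq]
    constructor
    · rintro ⟨hN, g', rfl⟩
      refine ⟨hN, ?_⟩
      by_cases h0 : g' = 0
      · exact ⟨(0,0), by rw [gr5_00, ← hH0, h0]⟩
      by_cases hA : g' = a
      · exact ⟨(1,1), by rw [gr5_11, ← ha, hA]⟩
      by_cases hB : g' = b
      · exact ⟨(1,0), by rw [gr5_10, ← hb, hB]⟩
      by_cases hC : g' = c
      · exact ⟨(0,1), by rw [gr5_01, ← hc, hC]⟩
      · exact absurd (hbot g' h0 hA hB hC) hN
    · rintro ⟨hN, g, rfl⟩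
      refine ⟨hN, ?_⟩
      rcases four_cases g with rfl | rfl | rfl | rfl
      · exact ⟨0, by rw [hH0, gr5_00]⟩
      · exact ⟨c, by rw [hc, gr5_01]⟩
      · exact ⟨b, by rw [hb, gr5_10]⟩
      · exact ⟨a, by rw [ha, gr5_11]⟩

end
end

section
/- Let α, β ∈ F with α² + β² = 1 and set z := α + iβ. If z² ≠ 1, z³ ≠ 1 and z⁴ ≠ 1 (equivalently, the five scalars 1, z, z⁻¹, z², z⁻² are pairwise distinct), then the centralizer of p_{α,β} in SO(3,F) is exactly the subgroup P, i.e. {g ∈ SO(3,F) : g·p_{α,β} = p_{α,β}·g} = P. -/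
noncomputable section

open Matrix

variable (F : Type*) [Field F] [IsAlgClosed F] [CharZero F]

/-- `SO(3,F)` as a set of 3×3 matrices: `x xᵀ = 1` and `det x = 1`. -/
def SO3 : Set (Matrix (Fin 3) (Fin 3) F) := {g | g * gᵀ = 1 ∧ g.det = 1}

/-- The matrix `p_{α,β}` with rows `(1,0,0)`, `(0,α,β)`, `(0,−β,α)`. -/
def pab (a b : F) : Matrix (Fin 3) (Fin 3) F := !![1, 0, 0; 0, a, b; 0, -b, a]

/-- The maximal torus `P = {p_{α,β} : α² + β² = 1}` of `SO(3,F)`. -/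
def Pgrp : Set (Matrix (Fin 3) (Fin 3) F) :=
  {m | ∃ a b : F, a ^ 2 + b ^ 2 = 1 ∧ m = pab F a b}

/-- The matrix `s` with rows `(−1,0,0)`, `(0,0,1)`, `(0,1,0)`. -/
def sMat : Matrix (Fin 3) (Fin 3) F := !![-1, 0, 0; 0, 0, 1; 0, 1, 0]


/-- if `z = α + iβ` satisfies `z² ≠ 1`, `z³ ≠ 1`, `z⁴ ≠ 1`, then the
centralizer of `p_{α,β}` in `SO(3,F)` is exactly the subgroup `P`. -/
theorem centralizer_pab_eq_P (I : F) (hI : I ^ 2 = -1)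
    (a b : F) (hab : a ^ 2 + b ^ 2 = 1)
    (hz2 : (a + I * b) ^ 2 ≠ 1) (hz3 : (a + I * b) ^ 3 ≠ 1) (hz4 : (a + I * b) ^ 4 ≠ 1) :
    {g : Matrix (Fin 3) (Fin 3) F | g ∈ SO3 F ∧ g * pab F a b = pab F a b * g} = Pgrp F := by
  have hb : b ≠ 0 := by
    intro h
    subst h
    exact hz2 (by linear_combination hab)
  have hane : (1 : F) - a ≠ 0 := by
    intro h
    apply hb
    have ha : a = 1 := by linear_combination -h
    subst ha
    exact sq_eq_zero_iff.mp (by linear_combination hab)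
  ext g
  simp only [Set.mem_setOf_eq, Pgrp]
  constructor
  · rintro ⟨⟨horth, hdet⟩, hcomm⟩
    have h10 := congrFun (congrFun hcomm 1) 0
    have h20 := congrFun (congrFun hcomm 2) 0
    have h01 := congrFun (congrFun hcomm 0) 1
    have h02 := congrFun (congrFun hcomm 0) 2
    have h11 := congrFun (congrFun hcomm 1) 1
    have h12 := congrFun (congrFun hcomm 1) 2
    simp [pab, Matrix.mul_apply, Fin.sum_univ_three, Matrix.vecHead, Matrix.vecTail] at h10 h20 h01 h02 h11 h12
    have h2a : (2 : F) - 2 * a ≠ 0 := by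
      intro h
      exact hane (by linear_combination h / 2)
    have e20 : g 2 0 = 0 := by
      have key : (2 - 2 * a) * g 2 0 = 0 := by
        linear_combination (-b) * h10 + (1 - a) * h20 - g 2 0 * hab
      exact (mul_eq_zero.mp key).resolve_left h2a
    have e10 : g 1 0 = 0 := by
      refine mul_left_cancel₀ hane ?_
      linear_combination h10 + b * e20
    have e02 : g 0 2 = 0 := by
      have key : (2 - 2 * a) * g 0 2 = 0 := by
        linear_combination (-b) * h01 - (1 - a) * h02 - g 0 2 * hab
      exact (mul_eq_zero.mp key).resolve_left h2a
    have e01 : g 0 1 = 0 := by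
      refine mul_left_cancel₀ hb ?_
      linear_combination h02 + (1 - a) * e02
    have e21 : g 2 1 = -(g 1 2) := by
      refine mul_left_cancel₀ hb ?_
      linear_combination -h11
    have e22 : g 2 2 = g 1 1 := by
      refine mul_left_cancel₀ hb ?_
      linear_combination -h12
    have ho11 := congrFun (congrFun horth 1) 1
    simp [Matrix.mul_apply, Matrix.one_apply, Fin.sum_univ_three] at ho11
    have hcd : g 1 1 ^ 2 + g 1 2 ^ 2 = 1 := by
      linear_combination ho11 - g 1 0 * e10
    have hdet3 := hdet
    rw [Matrix.det_fin_three] at hdet3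
    rw [e01, e02, e10, e20, e21, e22] at hdet3
    have e00 : g 0 0 = 1 := by
      linear_combination hdet3 - g 0 0 * hcd
    refine ⟨g 1 1, g 1 2, hcd, ?_⟩
    ext i j
    fin_cases i <;> fin_cases j <;>
      simp [pab, e00, e01, e02, e10, e20, e21, e22, Matrix.vecHead, Matrix.vecTail]
  · rintro ⟨c, d, hcd, rfl⟩
    refine ⟨⟨?_, ?_⟩, ?_⟩
    · have ht : (pab F c d)ᵀ = !![1, 0, 0; 0, c, -d; 0, d, c] := by
        ext i j
        fin_cases i <;> fin_cases j <;> simp [pab, Matrix.vecHead, Matrix.vecTail]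
      rw [ht, pab, Matrix.mul_fin_three, Matrix.one_fin_three]
      ext i j
      fin_cases i <;> fin_cases j <;>
        simp [Matrix.vecHead, Matrix.vecTail] <;>
        first
          | linear_combination hcd
          | linear_combination
    · rw [pab, Matrix.det_fin_three]
      simp
      linear_combination hcd
    · ext i j
      fin_cases i <;> fin_cases j <;>
        simp [pab, Matrix.mul_apply, Fin.sum_univ_three, Matrix.vecHead, Matrix.vecTail] <;>
        ring


end
end

section
/- Let T = (Fˣ)ⁿ and let M ∈ GL(n,ℤ) satisfy M^m = I for some m ≥ 1, acting on T by the automorphism σ(t)_i = ∏_j t_j^{M_{ij}}. Then the following conditions are equivalent: (i) the fixed subgroup T^σ = {t ∈ T : σ(t) = t} is finite; (ii) every t ∈ T^σ satisfies t^m = 1 (that is, t_i^m = 1 for all i); (iii) for every t ∈ T one has t · σ(t) · σ²(t) ⋯ σ^{m−1}(t) = 1. -/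
open scoped BigOperators

noncomputable section

variable (F : Type*) [Field F] [IsAlgClosed F] [CharZero F]

/-- The automorphism of the torus `T = (Fˣ)ⁿ` induced by an integer matrix `M`:
`σ(t)_i = ∏_j t_j ^ M_{ij}`. -/
def sigmaM {n : ℕ} (M : Matrix (Fin n) (Fin n) ℤ) (t : Fin n → Fˣ) : Fin n → Fˣ :=
  fun i => ∏ j, t j ^ M i j

lemma zpow_sum' {ι : Type*} (x : Fˣ) (s : Finset ι) (f : ι → ℤ) :
    x ^ (∑ i ∈ s, f i) = ∏ i ∈ s, x ^ f i := by
  induction s using Finset.cons_induction with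
  | empty => simp
  | cons a s ha ih => simp [Finset.sum_cons, Finset.prod_cons, zpow_add, ih]

lemma sigmaM_mul {n : ℕ} (A B : Matrix (Fin n) (Fin n) ℤ) (t : Fin n → Fˣ) :
    sigmaM F (A * B) t = sigmaM F A (sigmaM F B t) := by
  funext i
  show (∏ l, t l ^ (A * B) i l) = ∏ j, (∏ l, t l ^ B j l) ^ A i j
  calc (∏ l, t l ^ (A * B) i l)
      = ∏ l, ∏ j, t l ^ (A i j * B j l) := by
        refine Finset.prod_congr rfl fun l _ => ?_
        rw [Matrix.mul_apply, zpow_sum']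
    _ = ∏ j, ∏ l, t l ^ (A i j * B j l) := Finset.prod_comm
    _ = ∏ j, (∏ l, t l ^ B j l) ^ A i j := by
        refine Finset.prod_congr rfl fun j _ => ?_
        rw [← Finset.prod_zpow]
        exact Finset.prod_congr rfl fun l _ => by rw [← zpow_mul, mul_comm]

lemma sigmaM_one {n : ℕ} (t : Fin n → Fˣ) : sigmaM F 1 t = t := by
  funext i
  simp only [sigmaM, Matrix.one_apply]
  rw [Finset.prod_eq_single i] <;> simp +contextual [eq_comm]

lemma sigmaM_zero {n : ℕ} (t : Fin n → Fˣ) : sigmaM F 0 t = 1 := by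
  funext i; simp [sigmaM]

lemma sigmaM_add {n : ℕ} (A B : Matrix (Fin n) (Fin n) ℤ) (t : Fin n → Fˣ) :
    sigmaM F (A + B) t = sigmaM F A t * sigmaM F B t := by
  funext i
  simp [sigmaM, Matrix.add_apply, zpow_add, Finset.prod_mul_distrib]

lemma sigmaM_sum {n : ℕ} {ι : Type*} (s : Finset ι) (A : ι → Matrix (Fin n) (Fin n) ℤ)
    (t : Fin n → Fˣ) :
    sigmaM F (∑ k ∈ s, A k) t = ∏ k ∈ s, sigmaM F (A k) t := by
  induction s using Finset.cons_induction with
  | empty => simp [sigmaM_zero]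
  | cons a s ha ih => rw [Finset.sum_cons, Finset.prod_cons, sigmaM_add, ih]

lemma sigmaM_iterate {n : ℕ} (A : Matrix (Fin n) (Fin n) ℤ) (t : Fin n → Fˣ) (k : ℕ) :
    (sigmaM F A)^[k] t = sigmaM F (A ^ k) t := by
  induction k with
  | zero => simp [sigmaM_one]
  | succ k ih =>
      rw [Function.iterate_succ_apply', ih, ← sigmaM_mul, ← pow_succ']

lemma sigmaM_smul {n : ℕ} (d : ℤ) (A : Matrix (Fin n) (Fin n) ℤ) (t : Fin n → Fˣ) :
    sigmaM F (d • A) t = (sigmaM F A t) ^ d := by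
  funext i
  simp only [sigmaM, Matrix.smul_apply, smul_eq_mul, Pi.pow_apply]
  rw [← Finset.prod_zpow]
  congr 1
  funext j
  rw [← zpow_mul, mul_comm]

lemma sigmaM_apply_one {n : ℕ} (A : Matrix (Fin n) (Fin n) ℤ) :
    sigmaM F A (1 : Fin n → Fˣ) = 1 := by
  funext i; simp [sigmaM]

lemma sigmaM_fixed_iff {n : ℕ} (A : Matrix (Fin n) (Fin n) ℤ) (t : Fin n → Fˣ) :
    sigmaM F A t = t ↔ sigmaM F (A - 1) t = 1 := by
  have h : sigmaM F ((A - 1) + 1) t = sigmaM F (A - 1) t * t := by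
    rw [sigmaM_add, sigmaM_one]
  rw [sub_add_cancel] at h
  constructor
  · intro ht; rw [ht] at h
    exact mul_right_cancel (by rw [← h, one_mul])
  · intro h1; rw [h, h1, one_mul]

/-- for `M ∈ GL(n,ℤ)` with `M^m = 1` acting on `T = (Fˣ)ⁿ` via `σ`,
the following are equivalent: (i) the fixed subgroup `T^σ` is finite; (ii) every fixed
point satisfies `t^m = 1` componentwise; (iii) `t·σ(t)·⋯·σ^{m−1}(t) = 1` for all `t`. -/
theorem torus_automorphism_fixed_points_tfae
    (n m : ℕ) (hn : 1 ≤ n) (hm : 1 ≤ m)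
    (M : Matrix.GeneralLinearGroup (Fin n) ℤ) (hM : M ^ m = 1) :
    ({t : Fin n → Fˣ | sigmaM F (M : Matrix (Fin n) (Fin n) ℤ) t = t}.Finite ↔
      ∀ t : Fin n → Fˣ, sigmaM F (M : Matrix (Fin n) (Fin n) ℤ) t = t →
        ∀ i, (t i) ^ m = 1) ∧
    ((∀ t : Fin n → Fˣ, sigmaM F (M : Matrix (Fin n) (Fin n) ℤ) t = t →
        ∀ i, (t i) ^ m = 1) ↔
      ∀ t : Fin n → Fˣ,
        ∏ k ∈ Finset.range m, (sigmaM F (M : Matrix (Fin n) (Fin n) ℤ))^[k] t = 1) := by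
  classical
  set A : Matrix (Fin n) (Fin n) ℤ := (M : Matrix (Fin n) (Fin n) ℤ) with hA
  have hAm : A ^ m = 1 := by
    rw [hA, ← Units.val_pow_eq_pow_val, hM, Units.val_one]
  set d : ℤ := (A - 1).det with hd
  -- an element of infinite order in Fˣ
  set u : Fˣ := Units.mk0 (2 : F) two_ne_zero with hu
  have huord : orderOf u = 0 := by
    rw [orderOf_eq_zero_iff']
    intro k hk h
    have h2 : ((2 : F)) ^ k = 1 := by
      have := congrArg Units.val h
      simpa [hu] using this
    have : ((2 ^ k : ℕ) : F) = ((1 : ℕ) : F) := by push_cast; simpa using h2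
    have h3 : (2 : ℕ) ^ k = 1 := Nat.cast_injective this
    have := Nat.one_lt_two_pow_iff.mpr (by omega : k ≠ 0)
    omega
  have huz : ∀ z : ℤ, u ^ z = 1 → z = 0 := by
    intro z h
    have := orderOf_dvd_iff_zpow_eq_one.mpr h
    rw [huord] at this
    exact_mod_cast zero_dvd_iff.mp this
  -- Step B : if d = 0, there is a one-parameter family of fixed points
  have stepB : d = 0 → ∃ v : Fin n → ℤ, v ≠ 0 ∧
      ∀ s : Fˣ, sigmaM F A (fun j => s ^ v j) = (fun j => s ^ v j) := by
    intro h0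
    obtain ⟨v, hv, hv0⟩ := Matrix.exists_mulVec_eq_zero_iff.mpr h0
    refine ⟨v, hv, fun s => ?_⟩
    have hAv : A.mulVec v = v := by
      have := hv0
      rw [Matrix.sub_mulVec, Matrix.one_mulVec, sub_eq_zero] at this
      exact this
    funext i
    simp only [sigmaM]
    calc (∏ j, (s ^ v j) ^ A i j) = ∏ j, s ^ (A i j * v j) := by
          refine Finset.prod_congr rfl fun j _ => ?_
          rw [← zpow_mul, mul_comm]
      _ = s ^ (∑ j, A i j * v j) := (zpow_sum' F s _ _).symm
      _ = s ^ (A.mulVec v i) := rfl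
      _ = s ^ v i := by rw [hAv]
  -- From step B: the fixed set is infinite
  have stepB1 : d = 0 → ¬ ({t : Fin n → Fˣ | sigmaM F A t = t}.Finite) := by
    intro h0 hfin
    obtain ⟨v, hv, hfix⟩ := stepB h0
    obtain ⟨j, hj⟩ : ∃ j, v j ≠ 0 := by
      by_contra h
      push_neg at h
      exact hv (funext h)
    have hinj : Function.Injective (fun k : ℕ => fun i => (u ^ (k : ℤ)) ^ v i) := by
      intro k l hkl
      have h0 := congrFun hkl j
      simp only [← zpow_mul] at h0
      have h1 : u ^ ((k : ℤ) * v j - (l : ℤ) * v j) = 1 := by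
        rw [zpow_sub, h0, mul_inv_cancel]
      have h2 := huz _ h1
      have h3 : ((k : ℤ) - l) * v j = 0 := by linarith [h2, sub_mul (k : ℤ) (l : ℤ) (v j)]
      rcases mul_eq_zero.mp h3 with h | h
      · exact_mod_cast sub_eq_zero.mp h
      · exact absurd h hj
    exact (Set.infinite_of_injective_forall_mem (s := {t : Fin n → Fˣ | sigmaM F A t = t})
      hinj (fun k => hfix (u ^ (k : ℤ)))) hfin
  -- From step B: condition (ii) fails
  have stepB2 : d = 0 → ¬ (∀ t : Fin n → Fˣ, sigmaM F A t = t → ∀ i, (t i) ^ m = 1) := by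
    intro h0 h2
    obtain ⟨v, hv, hfix⟩ := stepB h0
    obtain ⟨j, hj⟩ : ∃ j, v j ≠ 0 := by
      by_contra h
      push_neg at h
      exact hv (funext h)
    have h5 := h2 _ (hfix u) j
    rw [← zpow_natCast, ← zpow_mul] at h5
    have hm' : (m : ℤ) ≠ 0 := Int.natCast_ne_zero.mpr (by omega)
    exact absurd (huz _ h5) (mul_ne_zero hj hm')
  -- Step A : if d ≠ 0 the fixed set is finite
  have stepA : d ≠ 0 → ({t : Fin n → Fˣ | sigmaM F A t = t}.Finite) := by
    intro hd0
    set e : ℕ := d.natAbs with he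
    have he0 : e ≠ 0 := Int.natAbs_ne_zero.mpr hd0
    haveI : NeZero e := ⟨he0⟩
    have key : ∀ t : Fin n → Fˣ, sigmaM F A t = t → ∀ i, t i ^ e = 1 := by
      intro t ht i
      have h1 : sigmaM F (A - 1) t = 1 := (sigmaM_fixed_iff F _ _).mp ht
      have h2 : sigmaM F ((A - 1).adjugate * (A - 1)) t = 1 := by
        rw [sigmaM_mul, h1, sigmaM_apply_one]
      rw [Matrix.adjugate_mul, ← hd, sigmaM_smul, sigmaM_one] at h2
      have h3 : t i ^ d = 1 := congrFun h2 i
      have : t i ^ (e : ℤ) = 1 := by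
        rcases Int.natAbs_eq d with h | h
        · rw [← he] at h; rw [← h]; exact h3
        · rw [← he] at h
          have : t i ^ (-(e : ℤ)) = 1 := by rw [← h]; exact h3
          rw [zpow_neg, inv_eq_one] at this
          exact this
      rw [← zpow_natCast]
      exact this
    have hfin : ({x : Fˣ | x ^ e = 1}).Finite := by
      haveI : Fintype (rootsOfUnity e F) := Fintype.ofFinite _
      have heq : {x : Fˣ | x ^ e = 1} = ((rootsOfUnity e F : Subgroup Fˣ) : Set Fˣ) := by
        ext x; simp [SetLike.mem_coe, mem_rootsOfUnity]
      rw [heq]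
      exact ((rootsOfUnity e F : Subgroup Fˣ) : Set Fˣ).toFinite
    refine Set.Finite.subset (Set.Finite.pi (fun _ : Fin n => hfin)) ?_
    intro t ht
    simp only [Set.mem_pi, Set.mem_univ, forall_true_left]
    intro i
    first
    | exact key t ht i
    | exact fun _ => key t ht i
  -- Step C : if d ≠ 0 then condition (iii) holds
  have stepC : d ≠ 0 → ∀ t : Fin n → Fˣ,
      ∏ k ∈ Finset.range m, (sigmaM F A)^[k] t = 1 := by
    intro hd0 t
    set N : Matrix (Fin n) (Fin n) ℤ := ∑ k ∈ Finset.range m, A ^ k with hN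
    have hN0 : N = 0 := by
      have h1 : N * (A - 1) = 0 := by
        rw [hN, geom_sum_mul, hAm, sub_self]
      have h2 : N * ((A - 1) * (A - 1).adjugate) = 0 := by
        rw [← mul_assoc, h1, zero_mul]
      rw [Matrix.mul_adjugate, ← hd, Matrix.mul_smul, mul_one] at h2
      exact (smul_eq_zero_iff_right hd0).mp h2
    calc ∏ k ∈ Finset.range m, (sigmaM F A)^[k] t
        = ∏ k ∈ Finset.range m, sigmaM F (A ^ k) t := by
          exact Finset.prod_congr rfl fun k _ => sigmaM_iterate F A t k
      _ = sigmaM F N t := (sigmaM_sum F _ _ t).symm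
      _ = 1 := by rw [hN0, sigmaM_zero]
  -- (iii) implies (ii)
  have h32 : (∀ t : Fin n → Fˣ, ∏ k ∈ Finset.range m, (sigmaM F A)^[k] t = 1) →
      (∀ t : Fin n → Fˣ, sigmaM F A t = t → ∀ i, (t i) ^ m = 1) := by
    intro h3 t ht i
    have h4 : ∏ k ∈ Finset.range m, (sigmaM F A)^[k] t = 1 := h3 t
    have h5 : ∀ k, (sigmaM F A)^[k] t = t := fun k => Function.iterate_fixed ht k
    rw [Finset.prod_congr rfl (fun k _ => h5 k), Finset.prod_const, Finset.card_range] at h4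
    exact congrFun h4 i
  -- (ii) implies d ≠ 0
  have h2d : (∀ t : Fin n → Fˣ, sigmaM F A t = t → ∀ i, (t i) ^ m = 1) → d ≠ 0 :=
    fun h2 h0 => stepB2 h0 h2
  constructor
  · constructor
    · intro hfin
      have hd0 : d ≠ 0 := fun h0 => stepB1 h0 hfin
      exact h32 (stepC hd0)
    · intro h2
      exact stepA (h2d h2)
  · constructor
    · intro h2
      exact stepC (h2d h2)
    · exact h32

end
end
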